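/- Let r : ℤ → ℂ be a sequence supported on {-(N-1), ..., N-1}, and define its fractionally shifted bandlimited version (B^τ r)[n] = ∑_{q=-(N-1)}^{N-1} r[q] sinc(n - q - τ) for τ ∈ ℝ. Then the total energy is preserved: ∑_{n∈ℤ} |(B^τ r)[n]|² = ∑_{q=-(N-1)}^{N-1} |r[q]|². -/

import Mathlib

open scoped Real
open Finset Complex MeasureTheory AddCircle

noncomputable def sinc (x : ℝ) : ℝ := if x = 0 then 1 else Real.sin (π * x) / (π * x)

noncomputable def gfun (c : ℝ) : ℝ → ℂ := fun t => Complex.exp (2 * π * c * t * Complex.I)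

noncomputable def Ffun (c : ℝ) : AddCircle (1:ℝ) → ℂ := AddCircle.liftIoc 1 0 (gfun c)

lemma measurable_Ffun (c : ℝ) : Measurable (Ffun c) := by
  have hg : Measurable (gfun c) := by
    apply Complex.continuous_exp.comp (by continuity) |>.measurable
  exact hg.comp (measurable_subtype_coe.comp (AddCircle.measurableEquivIoc 1 0).measurable)

lemma norm_Ffun (c : ℝ) (x : AddCircle (1:ℝ)) : ‖Ffun c x‖ = 1 := by
  simp only [Ffun, AddCircle.liftIoc, Function.comp_apply, Set.restrict_apply, gfun]
  set t : ℝ := ((AddCircle.equivIoc 1 0 x : Set.Ioc (0:ℝ) (0+1)) : ℝ)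
  have : (2 * ↑π * ↑c * (t:ℂ) * Complex.I) = ((2 * π * c * t : ℝ) : ℂ) * Complex.I := by
    push_cast; ring
  rw [this, Complex.norm_exp_ofReal_mul_I]

lemma memLp_Ffun (c : ℝ) : MemLp (Ffun c) 2 (haarAddCircle : Measure (AddCircle (1:ℝ))) :=
  (memLp_top_of_bound (measurable_Ffun c).aestronglyMeasurable 1
    (Filter.Eventually.of_forall fun x => le_of_eq (norm_Ffun c x))).mono_exponent le_top

lemma sinc_neg (x : ℝ) : sinc (-x) = sinc x := by
  unfold sinc
  rcases eq_or_ne x 0 with h | h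
  · simp [h]
  · rw [if_neg (neg_ne_zero.mpr h), if_neg h, mul_neg, Real.sin_neg]
    field_simp

lemma sinc_int (k : ℤ) : sinc k = if k = 0 then 1 else 0 := by
  unfold sinc
  rcases eq_or_ne k 0 with h | h
  · simp [h]
  · rw [if_neg (by exact_mod_cast h), if_neg h, mul_comm, Real.sin_int_mul_pi, zero_div]

lemma key_int (d : ℝ) :
    (∫ x in (0:ℝ)..1, Complex.exp (2 * π * d * x * Complex.I)) =
      Complex.exp (π * d * Complex.I) * ((sinc d : ℝ) : ℂ) := by
  rcases eq_or_ne d 0 with h | h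
  · simp [h, sinc]
  have hπd : (π * d : ℂ) ≠ 0 := by
    exact_mod_cast mul_ne_zero (Real.pi_ne_zero) h
  have hc : (2 * π * d * Complex.I : ℂ) ≠ 0 := by
    simp [Complex.I_ne_zero, hπd, Real.pi_ne_zero, h]
  have : ∀ x : ℝ, (2 * π * d * x * Complex.I : ℂ) = (2 * π * d * Complex.I) * x := by
    intro x; ring
  simp_rw [this]
  rw [integral_exp_mul_complex hc]
  rw [show sinc d = Real.sin (π * d) / (π * d) from if_neg h]
  have hsin : ((Real.sin (π * d) / (π * d) : ℝ) : ℂ) = Complex.sin (π * d) / (π * d) := by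
    push_cast [Complex.ofReal_sin]; ring
  rw [hsin]
  set E := Complex.exp (↑π * ↑d * Complex.I) with hEdef
  have hE0 : E ≠ 0 := Complex.exp_ne_zero _
  have h2 : Complex.exp ((2 * ↑π * ↑d * Complex.I) * ((1:ℝ):ℂ)) = E * E := by
    rw [hEdef, ← Complex.exp_add]; push_cast; ring_nf
  have hE' : Complex.exp (-(↑π * ↑d) * Complex.I) = E⁻¹ := by
    rw [hEdef, ← Complex.exp_neg]; ring_nf
  rw [h2, Complex.sin, hE']
  push_cast
  rw [mul_zero, Complex.exp_zero, ← hEdef]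
  field_simp
  ring_nf
  rw [Complex.I_sq]
  field_simp
  ring

lemma coeff_Ffun (c : ℝ) (n : ℤ) : fourierCoeff (Ffun c) n =
    Complex.exp (π * (c - n) * Complex.I) * ((sinc (c - n) : ℝ) : ℂ) := by
  rw [Ffun, fourierCoeff_liftIoc_eq, fourierCoeffOn_eq_integral]
  have h1 : ∀ x ∈ Set.uIcc (0:ℝ) ((0:ℝ)+1),
      (fourier (-n) (x : AddCircle ((0:ℝ)+1-0))) • gfun c x
        = Complex.exp (2 * π * (c - n) * x * Complex.I) := by
    intro x _
    rw [fourier_coe_apply, smul_eq_mul, gfun, ← Complex.exp_add]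
    congr 1
    push_cast
    field_simp
    ring
  rw [intervalIntegral.integral_congr h1]
  norm_num
  have := key_int (c - n)
  push_cast at this ⊢
  rw [this]
set_option maxHeartbeats 1000000

noncomputable def Xc (c : ℝ) : Lp ℂ 2 (haarAddCircle : Measure (AddCircle (1:ℝ))) :=
  (memLp_Ffun c).toLp (Ffun c)

lemma coeff_Xc (c : ℝ) (n : ℤ) :
    fourierCoeff (Xc c : AddCircle (1:ℝ) → ℂ) n = fourierCoeff (Ffun c) n := by
  unfold fourierCoeff
  apply integral_congr_ae
  filter_upwards [(memLp_Ffun c).coeFn_toLp] with x hx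
  simp only [Xc]
  rw [hx]

lemma conj_Ffun_mul (a b : ℝ) (x : AddCircle (1:ℝ)) :
    (starRingEnd ℂ) (Ffun a x) * Ffun b x = Ffun (b - a) x := by
  simp only [Ffun, AddCircle.liftIoc, Function.comp_apply, Set.restrict_apply, gfun]
  rw [← Complex.exp_conj, ← Complex.exp_add]
  congr 1
  simp only [map_mul, Complex.conj_I, Complex.conj_ofReal, map_ofNat]
  push_cast
  ring

lemma inner_Xc (a b : ℝ) :
    (inner ℂ (Xc a) (Xc b) : ℂ) = fourierCoeff (Ffun (b - a)) 0 := by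
  rw [MeasureTheory.L2.inner_def]
  unfold fourierCoeff
  apply integral_congr_ae
  filter_upwards [(memLp_Ffun a).coeFn_toLp, (memLp_Ffun b).coeFn_toLp] with x hxa hxb
  simp only [Xc]
  rw [RCLike.inner_apply, hxa, hxb, mul_comm, conj_Ffun_mul, neg_zero, fourier_zero, one_smul]

set_option maxHeartbeats 1000000 in
lemma h1test (c : ℝ) (n : ℤ) : (inner ℂ (fourierBasis (T := 1) n) (Xc c) : ℂ) = fourierCoeff (Ffun c) n := by
  rw [← HilbertBasis.repr_apply_apply, fourierBasis_repr, coeff_Xc]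

set_option maxHeartbeats 1000000 in
lemma h2test (a : ℝ) (n : ℤ) : (inner ℂ (Xc a) (fourierBasis (T := 1) n) : ℂ) =
    (starRingEnd ℂ) (fourierCoeff (Ffun a) n) := by
  rw [← inner_conj_symm, h1test]

set_option maxHeartbeats 1000000 in
lemma keytest (a b : ℝ) (n : ℤ) :
    (inner ℂ (Xc a) (fourierBasis (T := 1) n) : ℂ) * inner ℂ (fourierBasis (T := 1) n) (Xc b)
      = Complex.exp (π * (b - a) * Complex.I) * ((sinc (a - n) * sinc (b - n) : ℝ) : ℂ) := by
  rw [h2test, h1test, coeff_Ffun, coeff_Ffun, map_mul, ← Complex.exp_conj]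
  have hconj : (starRingEnd ℂ) ((π : ℂ) * ((a : ℂ) - (n : ℂ)) * Complex.I)
      = -((π : ℂ) * ((a : ℂ) - (n : ℂ)) * Complex.I) := by
    simp only [map_mul, map_sub, Complex.conj_I, Complex.conj_ofReal, map_intCast]
    ring
  rw [hconj, Complex.conj_ofReal, mul_mul_mul_comm, ← Complex.exp_add]
  have harg : -((π : ℂ) * ((a : ℂ) - (n : ℂ)) * Complex.I) + (π : ℂ) * ((b : ℂ) - (n : ℂ)) * Complex.I
      = (π : ℂ) * ((b : ℂ) - (a : ℂ)) * Complex.I := by ring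
  rw [harg]
  push_cast
  ring

set_option maxHeartbeats 1000000 in
lemma hasSum_sinc_mul (a b : ℝ) :
    HasSum (fun n : ℤ => sinc (a - n) * sinc (b - n)) (sinc (b - a)) := by
  have H := HilbertBasis.hasSum_inner_mul_inner (fourierBasis (T := 1)) (Xc a) (Xc b)
  have hval : (inner ℂ (Xc a) (Xc b) : ℂ)
      = Complex.exp (π * (b - a) * Complex.I) * ((sinc (b - a) : ℝ) : ℂ) := by
    rw [inner_Xc, coeff_Ffun]
    norm_num
  rw [hval] at H
  have heq : (fun n : ℤ => (inner ℂ (Xc a) (fourierBasis (T := 1) n) : ℂ)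
      * inner ℂ (fourierBasis (T := 1) n) (Xc b))
      = fun n : ℤ => Complex.exp (π * (b - a) * Complex.I)
        * ((sinc (a - n) * sinc (b - n) : ℝ) : ℂ) := funext (keytest a b)
  rw [heq] at H
  exact Complex.hasSum_ofReal.mp ((hasSum_mul_left_iff (Complex.exp_ne_zero _)).mp H)

lemma hasSum_sinc_delta (τ : ℝ) (q q' : ℤ) :
    HasSum (fun n : ℤ => sinc ((n:ℝ) - q - τ) * sinc ((n:ℝ) - q' - τ))
      (if q = q' then (1:ℝ) else 0) := by
  have H := hasSum_sinc_mul ((q:ℝ) + τ) ((q':ℝ) + τ)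
  have h1 : (fun n : ℤ => sinc ((q:ℝ) + τ - n) * sinc ((q':ℝ) + τ - n))
      = fun n : ℤ => sinc ((n:ℝ) - q - τ) * sinc ((n:ℝ) - q' - τ) := by
    funext n
    rw [show ((q:ℝ) + τ - n) = -((n:ℝ) - q - τ) by ring, sinc_neg,
      show ((q':ℝ) + τ - n) = -((n:ℝ) - q' - τ) by ring, sinc_neg]
  have h2 : sinc ((q':ℝ) + τ - ((q:ℝ) + τ)) = if q = q' then (1:ℝ) else 0 := by
    rw [show ((q':ℝ) + τ - ((q:ℝ) + τ)) = (((q' - q : ℤ) : ℤ) : ℝ) by push_cast; ring, sinc_int]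
    simp [sub_eq_zero, eq_comm]
  rw [h1, h2] at H
  exact H

theorem stmt7 (N : ℕ) (hN : 0 < N) (τ : ℝ) (r : ℤ → ℂ)
    (hr : ∀ q : ℤ, q ∉ Finset.Icc (-(N : ℤ) + 1) ((N : ℤ) - 1) → r q = 0) :
    (∑' n : ℤ, ‖∑ q ∈ Finset.Icc (-(N : ℤ) + 1) ((N : ℤ) - 1),
        r q * ((sinc ((n : ℝ) - (q : ℝ) - τ) : ℝ) : ℂ)‖ ^ 2) =
    ∑ q ∈ Finset.Icc (-(N : ℤ) + 1) ((N : ℤ) - 1), ‖r q‖ ^ 2 := by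
  set Q := Finset.Icc (-(N : ℤ) + 1) ((N : ℤ) - 1) with hQ
  have hs : ∀ (x : ℤ → ℝ), HasSum
      (fun n : ℤ => (∑ q ∈ Q, x q * sinc ((n:ℝ) - q - τ))^2)
      (∑ q ∈ Q, (x q)^2) := by
    intro x
    have expand : (fun n : ℤ => (∑ q ∈ Q, x q * sinc ((n:ℝ) - q - τ))^2)
        = fun n : ℤ => ∑ q ∈ Q, ∑ q' ∈ Q,
            (x q * x q') * (sinc ((n:ℝ) - q - τ) * sinc ((n:ℝ) - q' - τ)) := by
      funext n
      rw [sq, Finset.sum_mul_sum]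
      exact Finset.sum_congr rfl fun q _ => Finset.sum_congr rfl fun q' _ => by ring
    have H : HasSum (fun n : ℤ => ∑ q ∈ Q, ∑ q' ∈ Q,
        (x q * x q') * (sinc ((n:ℝ) - q - τ) * sinc ((n:ℝ) - q' - τ)))
        (∑ q ∈ Q, ∑ q' ∈ Q, (x q * x q') * (if q = q' then (1:ℝ) else 0)) := by
      apply hasSum_sum
      intro q _
      apply hasSum_sum
      intro q' _
      exact (hasSum_sinc_delta τ q q').mul_left _
    have hv : (∑ q ∈ Q, ∑ q' ∈ Q, (x q * x q') * (if q = q' then (1:ℝ) else 0))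
        = ∑ q ∈ Q, (x q)^2 := by
      apply Finset.sum_congr rfl
      intro q hq
      rw [Finset.sum_eq_single q]
      · simp [sq]
      · intro q' _ hq'; simp [Ne.symm hq']
      · intro h; exact absurd hq h
    rw [hv] at H
    rw [expand]
    exact H
  have hre := hs fun q => (r q).re
  have him := hs fun q => (r q).im
  have h := hre.add him
  have hval : ((∑ q ∈ Q, ((r q).re)^2) + ∑ q ∈ Q, ((r q).im)^2) = ∑ q ∈ Q, ‖r q‖^2 := by
    rw [← Finset.sum_add_distrib]
    apply Finset.sum_congr rfl
    intro q _
    rw [Complex.sq_norm, Complex.normSq_apply]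
    ring
  rw [hval] at h
  have hfun : ∀ n : ℤ, ‖∑ q ∈ Q, r q * ((sinc ((n:ℝ) - (q:ℝ) - τ) : ℝ) : ℂ)‖^2
      = (∑ q ∈ Q, (r q).re * sinc ((n:ℝ) - q - τ))^2
        + (∑ q ∈ Q, (r q).im * sinc ((n:ℝ) - q - τ))^2 := by
    intro n
    have hre2 : (∑ q ∈ Q, r q * ((sinc ((n:ℝ) - (q:ℝ) - τ) : ℝ) : ℂ)).re
        = ∑ q ∈ Q, (r q).re * sinc ((n:ℝ) - q - τ) := by
      rw [Complex.re_sum]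
      exact Finset.sum_congr rfl fun q _ => by
        rw [Complex.mul_re, Complex.ofReal_re, Complex.ofReal_im, mul_zero, sub_zero]
    have him2 : (∑ q ∈ Q, r q * ((sinc ((n:ℝ) - (q:ℝ) - τ) : ℝ) : ℂ)).im
        = ∑ q ∈ Q, (r q).im * sinc ((n:ℝ) - q - τ) := by
      rw [Complex.im_sum]
      exact Finset.sum_congr rfl fun q _ => by
        rw [Complex.mul_im, Complex.ofReal_re, Complex.ofReal_im, mul_zero, zero_add]
    rw [Complex.sq_norm, Complex.normSq_apply, hre2, him2]
    ring
  calc (∑' n : ℤ, ‖∑ q ∈ Q, r q * ((sinc ((n:ℝ) - (q:ℝ) - τ) : ℝ) : ℂ)‖^2)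
      = ∑' n : ℤ, ((∑ q ∈ Q, (r q).re * sinc ((n:ℝ) - q - τ))^2
        + (∑ q ∈ Q, (r q).im * sinc ((n:ℝ) - q - τ))^2) := tsum_congr hfun
    _ = ∑ q ∈ Q, ‖r q‖^2 := h.tsum_eq
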